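/- Fix reals β ∈ (0,1) and 0 < t ≤ s with t a positive integer. With l = ⌊βn⌋, the ratio C(n-s, l-t)/C(n,l) tends to β^t(1-β)^{s-t} as n → ∞, where C(x, m) = Γ(x+1)/(Γ(m+1)Γ(x-m+1)) for real x ≥ m. -/

import Mathlib

open Real Filter

-- Wendel upper: Γ(x+r) ≤ Γ(x) x^r for r ∈ [0,1], x > 0
lemma wendel_upper {r x : ℝ} (hr0 : 0 ≤ r) (hr1 : r ≤ 1) (hx : 0 < x) :
    Gamma (x + r) ≤ Gamma x * x ^ r := by
  have h := Real.convexOn_log_Gamma.2 (Set.mem_Ioi.mpr hx)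
    (Set.mem_Ioi.mpr (by linarith : (0:ℝ) < x + 1)) (by linarith : (0:ℝ) ≤ 1 - r) hr0
    (by ring)
  simp only [smul_eq_mul, Function.comp_apply] at h
  have hc : (1 - r) * x + r * (x + 1) = x + r := by ring
  rw [hc] at h
  have hG1 : Gamma (x + 1) = x * Gamma x := Real.Gamma_add_one hx.ne'
  have hGx : 0 < Gamma x := Real.Gamma_pos_of_pos hx
  have hGxr : 0 < Gamma (x + r) := Real.Gamma_pos_of_pos (by linarith)
  rw [hG1, Real.log_mul hx.ne' hGx.ne'] at h
  rw [← Real.log_le_log_iff hGxr (by positivity), Real.log_mul hGx.ne' (by positivity),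
    Real.log_rpow hx]
  linarith

-- Wendel lower: x Γ(x) ≤ Γ(x+r) (x+r)^(1-r)
lemma wendel_lower {r x : ℝ} (hr0 : 0 ≤ r) (hr1 : r ≤ 1) (hx : 0 < x) :
    x * Gamma x ≤ Gamma (x + r) * (x + r) ^ (1 - r) := by
  have h := Real.convexOn_log_Gamma.2 (Set.mem_Ioi.mpr (by linarith : (0:ℝ) < x + r))
    (Set.mem_Ioi.mpr (by linarith : (0:ℝ) < x + r + 1)) hr0 (by linarith : (0:ℝ) ≤ 1 - r)
    (by ring)
  simp only [smul_eq_mul, Function.comp_apply] at h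
  have hc : r * (x + r) + (1 - r) * (x + r + 1) = x + 1 := by ring
  rw [hc] at h
  have hGxr : 0 < Gamma (x + r) := Real.Gamma_pos_of_pos (by linarith)
  have hGx : 0 < Gamma x := Real.Gamma_pos_of_pos hx
  have hG1 : Gamma (x + r + 1) = (x + r) * Gamma (x + r) :=
    Real.Gamma_add_one (by positivity : (0:ℝ) < x + r).ne'
  rw [Real.Gamma_add_one hx.ne', hG1, Real.log_mul (by positivity) hGxr.ne'] at h
  rw [Real.log_mul hx.ne' hGx.ne'] at h
  rw [← Real.log_le_log_iff (by positivity) (by positivity),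
    Real.log_mul hx.ne' hGx.ne', Real.log_mul hGxr.ne' (by positivity),
    Real.log_rpow (by positivity)]
  nlinarith [h]

lemma tendsto_div_add_const (r : ℝ) : Tendsto (fun x : ℝ => x / (x + r)) atTop (nhds 1) := by
  have h : Tendsto (fun x : ℝ => 1 - r / (x + r)) atTop (nhds 1) := by
    have := Tendsto.div_atTop (tendsto_const_nhds (x := r)) (tendsto_atTop_add_const_right atTop r tendsto_id)
    simpa using (tendsto_const_nhds (x := (1:ℝ))).sub this
  apply h.congr'
  filter_upwards [eventually_gt_atTop (max 0 (-r))] with x hx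
  have hxr : 0 < x + r := by
    have := lt_of_le_of_lt (le_max_right 0 (-r)) hx; linarith
  field_simp
  ring

lemma tendsto_R_unit {r : ℝ} (hr0 : 0 ≤ r) (hr1 : r ≤ 1) :
    Tendsto (fun x : ℝ => Gamma (x + r) / (Gamma x * x ^ r)) atTop (nhds 1) := by
  apply tendsto_of_tendsto_of_tendsto_of_le_of_le'
    (g := fun x : ℝ => (x / (x + r)) ^ (1 - r)) (h := fun _ => (1:ℝ))
  · have := (tendsto_div_add_const r).rpow_const (p := 1 - r) (Or.inr (by linarith))
    simpa using this
  · exact tendsto_const_nhds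
  · filter_upwards [eventually_gt_atTop (0:ℝ)] with x hx
    have hxr : 0 < x + r := by linarith
    have hGx : 0 < Gamma x := Real.Gamma_pos_of_pos hx
    have hGxr : 0 < Gamma (x + r) := Real.Gamma_pos_of_pos hxr
    have hw := wendel_lower hr0 hr1 hx
    rw [Real.div_rpow hx.le hxr.le, div_le_div_iff₀ (by positivity) (by positivity)]
    have hxx : x ^ (1 - r) * x ^ r = x := by
      rw [← Real.rpow_add hx]; norm_num
    rw [show x ^ (1 - r) * (Gamma x * x ^ r) = x ^ (1 - r) * x ^ r * Gamma x from by ring, hxx]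
    exact hw
  · filter_upwards [eventually_gt_atTop (0:ℝ)] with x hx
    have hGx : 0 < Gamma x := Real.Gamma_pos_of_pos hx
    rw [div_le_one (by positivity)]
    exact wendel_upper hr0 hr1 hx

lemma tendsto_R_step {a : ℝ} (ha : 0 ≤ a)
    (h : Tendsto (fun x : ℝ => Gamma (x + a) / (Gamma x * x ^ a)) atTop (nhds 1)) :
    Tendsto (fun x : ℝ => Gamma (x + (a + 1)) / (Gamma x * x ^ (a + 1))) atTop (nhds 1) := by
  have h2 : Tendsto (fun x : ℝ => (x + a) / x) atTop (nhds 1) := by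
    have := Tendsto.div_atTop (tendsto_const_nhds (x := a)) (tendsto_id (α := ℝ))
    have h3 := ((tendsto_const_nhds (x := (1:ℝ))).add this)
    rw [add_zero] at h3
    apply h3.congr'
    filter_upwards [eventually_gt_atTop (0:ℝ)] with x hx
    simp only [id]
    field_simp
  have hm := h2.mul h
  rw [one_mul] at hm
  refine Tendsto.congr' ?_ hm
  filter_upwards [eventually_gt_atTop (0:ℝ)] with x hx
  have hxa : 0 < x + a := by linarith
  have hG : Gamma (x + (a + 1)) = (x + a) * Gamma (x + a) := by
    rw [show x + (a + 1) = (x + a) + 1 from by ring]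
    exact Real.Gamma_add_one hxa.ne'
  have hGx : 0 < Gamma x := Real.Gamma_pos_of_pos hx
  rw [hG, Real.rpow_add hx, Real.rpow_one]
  field_simp

lemma tendsto_R {a : ℝ} (ha : 0 ≤ a) :
    Tendsto (fun x : ℝ => Gamma (x + a) / (Gamma x * x ^ a)) atTop (nhds 1) := by
  have key : ∀ k : ℕ, ∀ r : ℝ, 0 ≤ r → r ≤ 1 →
      Tendsto (fun x : ℝ => Gamma (x + (r + k)) / (Gamma x * x ^ (r + k))) atTop (nhds 1) := by
    intro k
    induction k with
    | zero => intro r h0 h1; simpa using tendsto_R_unit h0 h1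
    | succ m ih =>
      intro r h0 h1
      have := tendsto_R_step (a := r + m) (by positivity) (ih r h0 h1)
      convert this using 3 <;> push_cast <;> ring
  have h := key ⌊a⌋₊ (a - ⌊a⌋₊) (by
      have := Nat.floor_le ha; linarith)
    (by have := Nat.lt_floor_add_one a; linarith)
  simpa using h

noncomputable def Cg (x m : ℝ) : ℝ :=
  Real.Gamma (x + 1) / (Real.Gamma (m + 1) * Real.Gamma (x - m + 1))

theorem stmt_15 (β : ℝ) (hβ : β ∈ Set.Ioo (0:ℝ) 1)
    (t : ℕ) (ht : 0 < t) (s : ℝ) (hts : (t:ℝ) ≤ s) :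
    Filter.Tendsto
      (fun n : ℕ =>
        Cg ((n:ℝ) - s) ((Nat.floor (β * n) : ℝ) - t) /
          Cg (n:ℝ) ((Nat.floor (β * n) : ℝ)))
      Filter.atTop (nhds (β ^ t * (1 - β) ^ (s - (t:ℝ)))) := by
  obtain ⟨hβ0, hβ1⟩ := hβ
  set l : ℕ → ℝ := fun n => (Nat.floor (β * n) : ℝ) with hl
  have hts0 : (0:ℝ) ≤ s - t := by linarith
  have ht0 : (0:ℝ) ≤ t := by positivity
  have hs0 : (0:ℝ) ≤ s := le_trans ht0 hts
  have hl_le : ∀ n : ℕ, l n ≤ β * n := fun n => Nat.floor_le (by positivity)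
  have hl_gt : ∀ n : ℕ, β * n - 1 < l n := fun n => by
    have := Nat.lt_floor_add_one (β * n); simp only [hl]; linarith
  -- x/n limits
  have hninv : Tendsto (fun n : ℕ => (1:ℝ) / n) atTop (nhds 0) := tendsto_one_div_atTop_nhds_zero_nat
  have hln : Tendsto (fun n : ℕ => l n / n) atTop (nhds β) := by
    apply tendsto_of_tendsto_of_tendsto_of_le_of_le'
      (g := fun n : ℕ => β - 1 / n) (h := fun _ : ℕ => β)
    · simpa using (tendsto_const_nhds (x := β)).sub hninv
    · exact tendsto_const_nhds
    · filter_upwards [eventually_gt_atTop 0] with n hn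
      have hn' : (0:ℝ) < n := by exact_mod_cast hn
      rw [sub_le_iff_le_add, ← add_div, le_div_iff₀ hn']
      have := hl_gt n; nlinarith
    · filter_upwards [eventually_gt_atTop 0] with n hn
      have hn' : (0:ℝ) < n := by exact_mod_cast hn
      rw [div_le_iff₀ hn']
      exact hl_le n
  -- atTop limits
  have hnat : Tendsto (fun n : ℕ => (n:ℝ)) atTop atTop := tendsto_natCast_atTop_atTop
  have hx1 : Tendsto (fun n : ℕ => (n:ℝ) + 1 - s) atTop atTop :=
    tendsto_atTop_add_const_right _ _ (tendsto_atTop_add_const_right _ _ hnat)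
  have hlt : Tendsto (fun n : ℕ => l n) atTop atTop := by
    refine tendsto_atTop_mono (fun n => ?_)
      (tendsto_atTop_add_const_right _ (-1) (hnat.const_mul_atTop hβ0))
    have := hl_gt n; linarith
  have hx2 : Tendsto (fun n : ℕ => l n + 1 - (t:ℝ)) atTop atTop :=
    tendsto_atTop_add_const_right _ _ (tendsto_atTop_add_const_right _ _ hlt)
  have hnl : Tendsto (fun n : ℕ => (n:ℝ) - l n) atTop atTop := by
    refine tendsto_atTop_mono (fun n => ?_)
      (hnat.const_mul_atTop (by linarith : (0:ℝ) < 1 - β))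
    have := hl_le n; nlinarith
  have hx3 : Tendsto (fun n : ℕ => (n:ℝ) - l n + 1 - (s - t)) atTop atTop :=
    tendsto_atTop_add_const_right _ _ (tendsto_atTop_add_const_right _ _ hnl)
  -- ratio limits
  have hden : Tendsto (fun n : ℕ => 1 + (1 - s) / n) atTop (nhds 1) := by
    have := hninv.const_mul (1 - s)
    have h2 := (tendsto_const_nhds (x := (1:ℝ))).add this
    rw [mul_zero, add_zero] at h2
    apply h2.congr
    intro n; rw [mul_one_div]
  have hr2 : Tendsto (fun n : ℕ => (l n + 1 - t) / ((n:ℝ) + 1 - s)) atTop (nhds β) := by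
    have hnum : Tendsto (fun n : ℕ => l n / n + (1 - t) / n) atTop (nhds β) := by
      have := hln.add ((hninv.const_mul (1 - (t:ℝ))).congr (fun n => by rw [mul_one_div]))
      simpa using this
    have := hnum.div hden one_ne_zero
    rw [div_one] at this
    apply this.congr'
    filter_upwards [eventually_gt_atTop 0] with n hn
    have hn' : (0:ℝ) < n := by exact_mod_cast hn
    simp only [Pi.div_apply]
    field_simp
    ring
  have hr3 : Tendsto (fun n : ℕ => ((n:ℝ) - l n + 1 - (s - t)) / ((n:ℝ) + 1 - s)) atTop
      (nhds (1 - β)) := by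
    have hnum : Tendsto (fun n : ℕ => 1 - l n / n + (1 - (s - t)) / n) atTop (nhds (1 - β)) := by
      have := ((tendsto_const_nhds (x := (1:ℝ))).sub hln).add
        ((hninv.const_mul (1 - (s - (t:ℝ)))).congr (fun n => by rw [mul_one_div]))
      simpa using this
    have := hnum.div hden one_ne_zero
    rw [div_one] at this
    apply this.congr'
    filter_upwards [eventually_gt_atTop 0] with n hn
    have hn' : (0:ℝ) < n := by exact_mod_cast hn
    simp only [Pi.div_apply]
    field_simp
    ring
  -- the main product
  have hA := (tendsto_R ht0).comp hx2
  have hB := (tendsto_R hts0).comp hx3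
  have hC := (tendsto_R hs0).comp hx1
  have hD := hr2.rpow_const (p := (t:ℝ)) (Or.inl hβ0.ne')
  have hE := hr3.rpow_const (p := s - t) (Or.inr hts0)
  have hP := ((hA.mul hB).div hC one_ne_zero).mul (hD.mul hE)
  rw [mul_one, one_div_one, one_mul] at hP
  have hgoal : β ^ (t:ℝ) * (1 - β) ^ (s - (t:ℝ)) = β ^ t * (1 - β) ^ (s - (t:ℝ)) := by
    rw [Real.rpow_natCast]
  rw [hgoal] at hP
  refine Tendsto.congr' ?_ hP
  filter_upwards [hx1.eventually (eventually_gt_atTop 0), hx2.eventually (eventually_gt_atTop 0),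
    hx3.eventually (eventually_gt_atTop 0)] with n h1 h2 h3
  simp only [Pi.div_apply, Pi.mul_apply, Function.comp_apply, Cg]
  have hfl : ((Nat.floor (β * (n:ℕ)) : ℕ) : ℝ) = l n := rfl
  rw [hfl]
  have e1 : l n + 1 - (t:ℝ) + t = l n + 1 := by ring
  have e2 : (n:ℝ) - l n + 1 - (s - t) + (s - t) = (n:ℝ) - l n + 1 := by ring
  have e3 : (n:ℝ) + 1 - s + s = (n:ℝ) + 1 := by ring
  have e5 : (n:ℝ) - s - (l n - t) + 1 = (n:ℝ) - l n + 1 - (s - t) := by ring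
  have e6 : l n - (t:ℝ) + 1 = l n + 1 - t := by ring
  have hd2 : ((l n + 1 - t) / ((n:ℝ) + 1 - s)) ^ (t:ℝ)
      = (l n + 1 - t) ^ (t:ℝ) / ((n:ℝ) + 1 - s) ^ (t:ℝ) := Real.div_rpow h2.le h1.le _
  have hd3 : (((n:ℝ) - l n + 1 - (s - t)) / ((n:ℝ) + 1 - s)) ^ (s - t)
      = ((n:ℝ) - l n + 1 - (s - t)) ^ (s - t) / ((n:ℝ) + 1 - s) ^ (s - t) :=
    Real.div_rpow h3.le h1.le _
  have hsplit : ((n:ℝ) + 1 - s) ^ s = ((n:ℝ) + 1 - s) ^ (t:ℝ) * ((n:ℝ) + 1 - s) ^ (s - t) := by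
    rw [← Real.rpow_add h1]; ring_nf
  rw [hd2, hd3, e1, e2, e3, e5, e6, show (n:ℝ) - s + 1 = (n:ℝ) + 1 - s from by ring, hsplit]
  have hG1 : 0 < Real.Gamma ((n:ℝ) + 1 - s) := Real.Gamma_pos_of_pos h1
  have hG2 : 0 < Real.Gamma (l n + 1 - t) := Real.Gamma_pos_of_pos h2
  have hG3 : 0 < Real.Gamma ((n:ℝ) - l n + 1 - (s - t)) := Real.Gamma_pos_of_pos h3
  have hG4 : 0 < Real.Gamma ((n:ℝ) + 1) := Real.Gamma_pos_of_pos (by linarith)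
  have hG5 : 0 < Real.Gamma (l n + 1) := Real.Gamma_pos_of_pos (by linarith)
  have hG6 : 0 < Real.Gamma ((n:ℝ) - l n + 1) := Real.Gamma_pos_of_pos (by linarith)
  have hp1t : (0:ℝ) < ((n:ℝ) + 1 - s) ^ (t:ℝ) := Real.rpow_pos_of_pos h1 _
  have hp1st : (0:ℝ) < ((n:ℝ) + 1 - s) ^ (s - t) := Real.rpow_pos_of_pos h1 _
  have hp2 : (0:ℝ) < (l n + 1 - t) ^ (t:ℝ) := Real.rpow_pos_of_pos h2 _
  have hp3 : (0:ℝ) < ((n:ℝ) - l n + 1 - (s - t)) ^ (s - t) := Real.rpow_pos_of_pos h3 _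
  field_simp
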